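/- For integers m ≥ 0 and n, s ≥ 1, real δ > 0, and x = (x₁,...,x_s) ∈ ℂ^s, define f_{m,n,s}(x) = Σ_{m+1 ≤ ℓ₁ < ... < ℓ_s ≤ m+n} x₁^{ℓ₁}···x_s^{ℓ_s}. Let q be the maximum number of pairwise disjoint nonempty intervals I₁,...,I_q of consecutive integers in {1,...,s} with |1 - Π_{j∈I_r} x_j| < δ for all r, and let K = max(1, max_{1≤a≤s} Π_{j=a}^s |x_j|). Then |f_{m,n,s}(x)| ≤ K^{m+n+1} (2/δ)^s Σ_{r=0}^q (δn)^r / r!. -/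

import Mathlib

open scoped Classical

open Finset

noncomputable def Complex.abs : AbsoluteValue ℂ ℝ := NormedField.toAbsoluteValue ℂ

noncomputable def Ftup : (σ : ℕ) → (Fin σ → ℂ) → ℕ → ℕ → ℂ
  | 0, _, _, _ => 1
  | σ+1, z, a, b => ∑ t ∈ Finset.Icc a b, z 0 ^ t * Ftup σ (Fin.tail z) (t+1) b

lemma EQ : ∀ (σ : ℕ) (z : Fin σ → ℂ) (a b : ℕ),
    ∑ ℓ ∈ (Fintype.piFinset fun _ : Fin σ => Finset.Icc a b).filter (fun ℓ => StrictMono ℓ),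
      ∏ j, z j ^ ℓ j = Ftup σ z a b := by
  intro σ
  induction σ with
  | zero =>
    intro z a b
    rw [Ftup]
    have h1 : ∀ ℓ : Fin 0 → ℕ, StrictMono ℓ := fun ℓ a b _ => a.elim0
    rw [Finset.filter_true_of_mem (fun ℓ _ => h1 ℓ)]
    have h2 : (Fintype.piFinset fun _ : Fin 0 => Finset.Icc a b) = {fun i => i.elim0} := by
      apply Finset.eq_singleton_iff_unique_mem.mpr
      refine ⟨Fintype.mem_piFinset.mpr (fun i => i.elim0), fun y _ => funext fun i => i.elim0⟩
    rw [h2]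
    simp
  | succ σ ih =>
    intro z a b
    rw [Ftup]
    have : ∀ t ∈ Finset.Icc a b, z 0 ^ t * Ftup σ (Fin.tail z) (t+1) b
        = ∑ ℓ' ∈ (Fintype.piFinset fun _ : Fin σ => Finset.Icc (t+1) b).filter
            (fun ℓ => StrictMono ℓ), z 0 ^ t * ∏ j, Fin.tail z j ^ ℓ' j := by
      intro t _
      rw [← ih (Fin.tail z) (t+1) b, Finset.mul_sum]
    rw [Finset.sum_congr rfl this, Finset.sum_sigma']
    refine Finset.sum_nbij' (fun ℓ => (⟨ℓ 0, Fin.tail ℓ⟩ : (_ : ℕ) × (Fin σ → ℕ)))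
      (fun p => (Fin.cons p.1 p.2 : Fin (σ+1) → ℕ)) ?_ ?_ ?_ ?_ ?_
    · intro ℓ hℓ
      simp only [Finset.mem_filter, Fintype.mem_piFinset, Finset.mem_Icc] at hℓ
      obtain ⟨hval, hmono⟩ := hℓ
      simp only [Finset.mem_sigma, Finset.mem_filter, Fintype.mem_piFinset, Finset.mem_Icc]
      refine ⟨(hval 0), ⟨fun j => ⟨Nat.succ_le_of_lt (hmono (Fin.succ_pos j)), (hval j.succ).2⟩, ?_⟩⟩
      intro i j hij
      exact hmono (Fin.succ_lt_succ_iff.mpr hij)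
    · rintro ⟨t, ℓ'⟩ hp
      simp only [Finset.mem_sigma, Finset.mem_filter, Fintype.mem_piFinset, Finset.mem_Icc] at hp ⊢
      obtain ⟨ht, hℓ', hmono⟩ := hp
      have hval : ∀ j, t + 1 ≤ ℓ' j ∧ ℓ' j ≤ b := hℓ'
      constructor
      · intro i
        refine Fin.cases ?_ ?_ i
        · simpa using ht
        · intro j
          simp only [Fin.cons_succ]
          exact ⟨le_trans ht.1 (le_trans (Nat.le_succ t) (hval j).1), (hval j).2⟩
      · intro u v huv
        cases v using Fin.cases with
        | zero => exact absurd huv (Fin.not_lt_zero u)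
        | succ j =>
          cases u using Fin.cases with
          | zero =>
            simp only [Fin.cons_zero, Fin.cons_succ]
            exact lt_of_lt_of_le (Nat.lt_succ_self t) (hval j).1
          | succ i =>
            simp only [Fin.cons_succ]
            exact hmono (Fin.succ_lt_succ_iff.mp huv)
    · intro ℓ _
      exact Fin.cons_self_tail ℓ
    · rintro ⟨t, ℓ'⟩ _
      simp [Fin.tail_cons]
    · intro ℓ _
      rw [Fin.prod_univ_succ]
      rfl

-- merge of first two coordinates
noncomputable def mergeT {σ : ℕ} (z : Fin (σ + 2) → ℂ) : Fin (σ + 1) → ℂ :=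
  Fin.cons (z 0 * z 1) (fun j => z j.succ.succ)

lemma swapIcc (a b : ℕ) (f : ℕ → ℕ → ℂ) :
    ∑ t ∈ Finset.Icc a b, ∑ u ∈ Finset.Icc (t+1) b, f t u
      = ∑ u ∈ Finset.Icc (a+1) b, ∑ t ∈ Finset.Ico a u, f t u := by
  apply Finset.sum_comm'
  intro t u
  simp only [Finset.mem_Icc, Finset.mem_Ico]
  omega

lemma tail_mergeT {σ : ℕ} (z : Fin (σ + 2) → ℂ) :
    Fin.tail (mergeT z) = Fin.tail (Fin.tail z) := by
  funext j
  show mergeT z j.succ = z j.succ.succ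
  simp [mergeT]

lemma identA {σ : ℕ} (z : Fin (σ + 2) → ℂ) (a b : ℕ) :
    (1 - z 0) * Ftup (σ + 2) z a b
      = z 0 ^ a * Ftup (σ + 1) (Fin.tail z) (a+1) b - Ftup (σ + 1) (mergeT z) (a+1) b := by
  have h1 : Ftup (σ + 2) z a b
      = ∑ t ∈ Finset.Icc a b, ∑ u ∈ Finset.Icc (t+1) b,
          z 0 ^ t * (z 1 ^ u * Ftup σ (Fin.tail (Fin.tail z)) (u+1) b) := by
    rw [Ftup]
    refine Finset.sum_congr rfl fun t _ => ?_
    rw [Ftup, Finset.mul_sum]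
    rfl
  rw [h1, swapIcc, Finset.mul_sum]
  have h2 : ∀ u ∈ Finset.Icc (a+1) b,
      (1 - z 0) * ∑ t ∈ Finset.Ico a u,
          (z 0 ^ t * (z 1 ^ u * Ftup σ (Fin.tail (Fin.tail z)) (u+1) b))
        = (z 0 ^ a - z 0 ^ u) * (z 1 ^ u * Ftup σ (Fin.tail (Fin.tail z)) (u+1) b) := by
    intro u hu
    rw [Finset.mem_Icc] at hu
    rw [← Finset.sum_mul]
    have g : (∑ t ∈ Finset.Ico a u, z 0 ^ t) * (z 0 - 1) = z 0 ^ u - z 0 ^ a :=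
      geom_sum_Ico_mul (z 0) (le_trans (Nat.le_succ a) hu.1)
    linear_combination (z 1 ^ u * Ftup σ (Fin.tail (Fin.tail z)) (u+1) b) * (- g)
  rw [Finset.sum_congr rfl h2, Ftup, Ftup, Finset.mul_sum, ← Finset.sum_sub_distrib]
  refine Finset.sum_congr rfl fun u hu => ?_
  rw [tail_mergeT]
  show (z 0 ^ a - z 0 ^ u) * (z 1 ^ u * Ftup σ (Fin.tail (Fin.tail z)) (u+1) b)
    = z 0 ^ a * (z 1 ^ u * Ftup σ (Fin.tail (Fin.tail z)) (u+1) b)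
      - ((z 0 * z 1) ^ u * Ftup σ (Fin.tail (Fin.tail z)) (u+1) b)
  ring

lemma powsum_nat (r : ℕ) : ∀ n : ℕ, (∑ t ∈ Finset.range n, t ^ r) * (r + 1) ≤ n ^ (r + 1) := by
  have key : ∀ n r : ℕ, n ^ (r+1) + (r+1) * n ^ r ≤ (n+1) ^ (r+1) := by
    intro n r
    induction r with
    | zero => simp
    | succ r ih =>
      have : (n+1) ^ (r+2) = (n+1) * (n+1) ^ (r+1) := by ring
      rw [this]
      calc n ^ (r+2) + (r+2) * n ^ (r+1)
          ≤ n ^ (r+2) + (r+2) * n ^ (r+1) + (r+1) * n ^ r := Nat.le_add_right _ _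
        _ = (n+1) * (n ^ (r+1) + (r+1) * n ^ r) := by ring
        _ ≤ (n+1) * (n+1) ^ (r+1) := Nat.mul_le_mul_left _ ih
  intro n
  induction n with
  | zero => simp
  | succ n ih =>
    rw [Finset.sum_range_succ, Nat.add_mul]
    calc (∑ t ∈ Finset.range n, t ^ r) * (r + 1) + n ^ r * (r + 1)
        ≤ n ^ (r+1) + (r+1) * n ^ r := by rw [Nat.mul_comm (n ^ r)]; exact Nat.add_le_add_right ih _
      _ ≤ (n+1) ^ (r+1) := key n r

lemma powsum_real (r n : ℕ) : (∑ t ∈ Finset.range n, (t : ℝ) ^ r) * (r + 1) ≤ (n : ℝ) ^ (r + 1) := by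
  have := powsum_nat r n
  have h2 : ((∑ t ∈ Finset.range n, t ^ r) * (r + 1) : ℕ) ≤ (n ^ (r + 1) : ℕ) := this
  calc (∑ t ∈ Finset.range n, (t : ℝ) ^ r) * (r + 1)
      = (((∑ t ∈ Finset.range n, t ^ r) * (r + 1) : ℕ) : ℝ) := by push_cast; ring
    _ ≤ ((n ^ (r+1) : ℕ) : ℝ) := by exact_mod_cast h2
    _ = (n : ℝ) ^ (r+1) := by push_cast; ring

lemma tailprod_filter {σ : ℕ} (z : Fin (σ + 1) → ℂ) (a : Fin σ) :
    ∏ j ∈ Finset.univ.filter (fun j => a ≤ j), Complex.abs (Fin.tail z j)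
      = ∏ j ∈ Finset.univ.filter (fun j => a.succ ≤ j), Complex.abs (z j) := by
  rw [Finset.prod_filter, Finset.prod_filter, Fin.prod_univ_succ]
  have h0 : ¬ (a.succ ≤ (0 : Fin (σ+1))) := by
    simp [Fin.le_def]
  rw [if_neg h0, one_mul]
  refine Finset.prod_congr rfl fun j _ => ?_
  exact if_congr Fin.succ_le_succ_iff.symm rfl rfl

lemma monoprod_bound : ∀ (σ : ℕ) (z : Fin σ → ℂ) (K : ℝ), 1 ≤ K →
    (∀ a : Fin σ, ∏ j ∈ Finset.univ.filter (fun j => a ≤ j), Complex.abs (z j) ≤ K) →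
    ∀ (ℓ : Fin σ → ℕ), Monotone ℓ → ∀ L : ℕ, (∀ j, ℓ j ≤ L) →
    ∏ j, Complex.abs (z j) ^ ℓ j ≤ K ^ L := by
  intro σ
  induction σ with
  | zero =>
    intro z K hK _ ℓ _ L _
    simpa using one_le_pow₀ hK (n := L)
  | succ σ ih =>
    intro z K hK htail ℓ hmono L hL
    set d := ℓ 0 with hd
    have hsplit : ∀ j : Fin (σ+1), Complex.abs (z j) ^ ℓ j
        = Complex.abs (z j) ^ d * Complex.abs (z j) ^ (ℓ j - d) := by
      intro j
      rw [← pow_add, Nat.add_sub_cancel' (hmono (Fin.zero_le j))]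
    rw [Finset.prod_congr rfl (fun j _ => hsplit j), Finset.prod_mul_distrib]
    have h1 : ∏ j, Complex.abs (z j) ^ d = (∏ j, Complex.abs (z j)) ^ d :=
      Finset.prod_pow _ _ _
    have hfull : ∏ j, Complex.abs (z j) ≤ K := by
      have := htail 0
      have huniv : Finset.univ.filter (fun j : Fin (σ+1) => (0 : Fin (σ+1)) ≤ j) = Finset.univ := by
        apply Finset.filter_true_of_mem
        intro j _; exact Fin.zero_le j
      rwa [huniv] at this
    have h2 : ∏ j, Complex.abs (z j) ^ (ℓ j - d) ≤ K ^ (L - d) := by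
      rw [Fin.prod_univ_succ]
      have hz : ℓ 0 - d = 0 := by omega
      rw [hz, pow_zero, one_mul]
      have := ih (Fin.tail z) K hK
        (fun a => le_trans (le_of_eq (tailprod_filter z a)) (htail a.succ))
        (fun j => ℓ j.succ - d)
        (fun i j hij => Nat.sub_le_sub_right (hmono (Fin.succ_le_succ_iff.mpr hij)) d)
        (L - d) (fun j => Nat.sub_le_sub_right (hL j.succ) d)
      simpa [Fin.tail] using this
    calc (∏ j, Complex.abs (z j) ^ d) * ∏ j, Complex.abs (z j) ^ (ℓ j - d)
        ≤ K ^ d * K ^ (L - d) := by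
          apply mul_le_mul _ h2 (Finset.prod_nonneg fun j _ => pow_nonneg (AbsoluteValue.nonneg _ _) _)
            (pow_nonneg (le_trans zero_le_one hK) _)
          rw [h1]
          exact pow_le_pow_left₀ (Finset.prod_nonneg fun j _ => AbsoluteValue.nonneg _ _) hfull d
      _ = K ^ (d + (L - d)) := (pow_add K d (L - d)).symm
      _ ≤ K ^ L := pow_le_pow_right₀ hK (by have := hL 0; omega)

def IsGoodFam {σ : ℕ} (z : Fin σ → ℂ) (δ : ℝ) (T : Finset (Finset (Fin σ))) : Prop :=
  (∀ I ∈ T, I.Nonempty) ∧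
  (∀ I ∈ T, ∀ a ∈ I, ∀ b ∈ I, ∀ c : Fin σ, a ≤ c → c ≤ b → c ∈ I) ∧
  (∀ I ∈ T, ∀ J ∈ T, I ≠ J → Disjoint I J) ∧
  (∀ I ∈ T, Complex.abs (1 - ∏ j ∈ I, z j) < δ)

lemma zero_not_mem_image_succ {σ : ℕ} (I : Finset (Fin σ)) :
    (0 : Fin (σ+1)) ∉ I.image Fin.succ := by
  simp only [Finset.mem_image, not_exists]
  rintro i ⟨_, hi⟩
  exact Fin.succ_ne_zero i hi

lemma image_succ_ivl {σ : ℕ} (I : Finset (Fin σ))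
    (hI : ∀ a ∈ I, ∀ b ∈ I, ∀ c : Fin σ, a ≤ c → c ≤ b → c ∈ I) :
    ∀ a ∈ I.image Fin.succ, ∀ b ∈ I.image Fin.succ, ∀ c : Fin (σ+1),
      a ≤ c → c ≤ b → c ∈ I.image Fin.succ := by
  intro a ha b hb c hac hcb
  simp only [Finset.mem_image] at ha hb ⊢
  obtain ⟨a0, ha0, rfl⟩ := ha
  obtain ⟨b0, hb0, rfl⟩ := hb
  have hc0 : c ≠ 0 := by
    intro h
    subst h
    exact Fin.succ_ne_zero a0 (Fin.le_zero_iff.mp hac)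
  obtain ⟨c0, rfl⟩ := Fin.eq_succ_of_ne_zero hc0
  exact ⟨c0, hI a0 ha0 b0 hb0 c0 (Fin.succ_le_succ_iff.mp hac) (Fin.succ_le_succ_iff.mp hcb), rfl⟩

lemma goodFam_tail {σ : ℕ} (z : Fin (σ+1) → ℂ) (δ : ℝ) (T : Finset (Finset (Fin σ)))
    (h : IsGoodFam (Fin.tail z) δ T) :
    IsGoodFam z δ (T.image (fun I => I.image Fin.succ))
      ∧ (T.image (fun I => I.image Fin.succ)).card = T.card := by
  obtain ⟨hne, hivl, hdisj, hgood⟩ := h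
  have himinj : Function.Injective (Finset.image (Fin.succ : Fin σ → Fin (σ+1))) :=
    Finset.image_injective (Fin.succ_injective σ)
  constructor
  · refine ⟨?_, ?_, ?_, ?_⟩
    · intro I hI
      simp only [Finset.mem_image] at hI
      obtain ⟨I0, hI0, rfl⟩ := hI
      exact (hne I0 hI0).image _
    · intro I hI
      simp only [Finset.mem_image] at hI
      obtain ⟨I0, hI0, rfl⟩ := hI
      exact image_succ_ivl I0 (hivl I0 hI0)
    · intro I hI J hJ hIJ
      simp only [Finset.mem_image] at hI hJ
      obtain ⟨I0, hI0, rfl⟩ := hI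
      obtain ⟨J0, hJ0, rfl⟩ := hJ
      have : I0 ≠ J0 := fun h => hIJ (by rw [h])
      rw [Finset.disjoint_left]
      intro x hx hx'
      simp only [Finset.mem_image] at hx hx'
      obtain ⟨i, hi, rfl⟩ := hx
      obtain ⟨j, hj, hji⟩ := hx'
      have : j = i := Fin.succ_injective σ hji
      subst this
      exact (Finset.disjoint_left.mp (hdisj I0 hI0 J0 hJ0 this)) hi hj
    · intro I hI
      simp only [Finset.mem_image] at hI
      obtain ⟨I0, hI0, rfl⟩ := hI
      have : ∏ j ∈ I0.image Fin.succ, z j = ∏ i ∈ I0, Fin.tail z i := by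
        rw [Finset.prod_image (fun x _ y _ h => Fin.succ_injective σ h)]
        rfl
      rw [this]
      exact hgood I0 hI0
  · exact Finset.card_image_of_injective T himinj

lemma goodFam_tail' {σ : ℕ} (z : Fin (σ+1) → ℂ) (δ : ℝ) (hz : Complex.abs (1 - z 0) < δ)
    (T : Finset (Finset (Fin σ))) (h : IsGoodFam (Fin.tail z) δ T) :
    IsGoodFam z δ (insert {0} (T.image (fun I => I.image Fin.succ)))
      ∧ (insert {0} (T.image (fun I => I.image Fin.succ))).card = T.card + 1 := by
  obtain ⟨⟨hne, hivl, hdisj, hgood⟩, hcard⟩ := goodFam_tail z δ T h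
  have h0T : ({0} : Finset (Fin (σ+1))) ∉ T.image (fun I => I.image Fin.succ) := by
    intro hmem
    simp only [Finset.mem_image] at hmem
    obtain ⟨I0, _, hI0⟩ := hmem
    have : (0 : Fin (σ+1)) ∈ I0.image Fin.succ := by rw [hI0]; exact Finset.mem_singleton_self 0
    exact zero_not_mem_image_succ I0 this
  have hdisj0 : ∀ J ∈ T.image (fun I => I.image Fin.succ),
      Disjoint ({0} : Finset (Fin (σ+1))) J := by
    intro J hJ
    simp only [Finset.mem_image] at hJ
    obtain ⟨J0, _, rfl⟩ := hJ
    rw [Finset.disjoint_left]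
    intro x hx
    rw [Finset.mem_singleton] at hx
    subst hx
    exact zero_not_mem_image_succ J0
  constructor
  · refine ⟨?_, ?_, ?_, ?_⟩
    · intro I hI
      rcases Finset.mem_insert.mp hI with rfl | hI'
      · exact Finset.singleton_nonempty 0
      · exact hne I hI'
    · intro I hI
      rcases Finset.mem_insert.mp hI with rfl | hI'
      · intro a ha b hb c hac hcb
        rw [Finset.mem_singleton] at ha hb ⊢
        subst ha; subst hb
        exact le_antisymm hcb hac
      · exact hivl I hI'
    · intro I hI J hJ hIJ
      rcases Finset.mem_insert.mp hI with rfl | hI' <;>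
        rcases Finset.mem_insert.mp hJ with rfl | hJ'
      · exact absurd rfl hIJ
      · exact hdisj0 J hJ'
      · exact (hdisj0 I hI').symm
      · exact hdisj I hI' J hJ' hIJ
    · intro I hI
      rcases Finset.mem_insert.mp hI with rfl | hI'
      · rwa [Finset.prod_singleton]
      · exact hgood I hI'
  · rw [Finset.card_insert_of_notMem h0T, hcard]

lemma mergeT_succ {σ : ℕ} (z : Fin (σ+2) → ℂ) (i : Fin (σ+1)) (hi : i ≠ 0) :
    mergeT z i = z i.succ := by
  obtain ⟨j, rfl⟩ := Fin.eq_succ_of_ne_zero hi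
  show (Fin.cons (z 0 * z 1) (fun j => z j.succ.succ) : Fin (σ+1) → ℂ) j.succ = _
  rw [Fin.cons_succ]

noncomputable def phiM {σ : ℕ} (I : Finset (Fin (σ+1))) : Finset (Fin (σ+2)) :=
  if (0 : Fin (σ+1)) ∈ I then insert 0 (I.image Fin.succ) else I.image Fin.succ

lemma phiM_erase {σ : ℕ} (I : Finset (Fin (σ+1))) : (phiM I).erase 0 = I.image Fin.succ := by
  unfold phiM
  split_ifs with h
  · exact Finset.erase_insert (zero_not_mem_image_succ I)
  · exact Finset.erase_eq_of_notMem (zero_not_mem_image_succ I)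

lemma phiM_inj {σ : ℕ} : Function.Injective (phiM (σ := σ)) := by
  intro I J h
  have := congrArg (fun S => S.erase 0) h
  simp only [phiM_erase] at this
  exact Finset.image_injective (Fin.succ_injective (σ+1)) this

lemma phiM_mem {σ : ℕ} (I : Finset (Fin (σ+1))) (x : Fin (σ+2)) :
    x ∈ phiM I ↔ (x = 0 ∧ (0 : Fin (σ+1)) ∈ I) ∨ (∃ i ∈ I, Fin.succ i = x) := by
  unfold phiM
  split_ifs with h
  · simp only [Finset.mem_insert, Finset.mem_image]
    constructor
    · rintro (rfl | hx)
      · exact Or.inl ⟨rfl, h⟩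
      · right; simpa using hx
    · rintro (⟨rfl, _⟩ | hx)
      · exact Or.inl rfl
      · right; simpa using hx
  · simp only [Finset.mem_image]
    constructor
    · intro hx; right; simpa using hx
    · rintro (⟨rfl, h0⟩ | hx)
      · exact absurd h0 h
      · simpa using hx

lemma phiM_prod {σ : ℕ} (z : Fin (σ+2) → ℂ) (I : Finset (Fin (σ+1))) :
    ∏ j ∈ phiM I, z j = ∏ i ∈ I, mergeT z i := by
  unfold phiM
  have himg : ∏ j ∈ I.image Fin.succ, z j = ∏ i ∈ I, z i.succ :=
    Finset.prod_image (fun x _ y _ h => Fin.succ_injective _ h)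
  split_ifs with h
  · rw [Finset.prod_insert (zero_not_mem_image_succ I), himg]
    rw [← Finset.mul_prod_erase I (fun i => z i.succ) h,
        ← Finset.mul_prod_erase I (mergeT z) h]
    have h1 : ∏ i ∈ I.erase 0, z i.succ = ∏ i ∈ I.erase 0, mergeT z i :=
      Finset.prod_congr rfl fun i hi => (mergeT_succ z i (Finset.ne_of_mem_erase hi)).symm
    rw [h1, Fin.succ_zero_eq_one]
    show z 0 * (z 1 * (∏ i ∈ I.erase 0, mergeT z i)) = z 0 * z 1 * (∏ i ∈ I.erase 0, mergeT z i)
    ring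
  · rw [himg]
    exact Finset.prod_congr rfl fun i hi =>
      (mergeT_succ z i (fun h0 => h (h0 ▸ hi))).symm

lemma phiM_ivl {σ : ℕ} (I : Finset (Fin (σ+1)))
    (hI : ∀ a ∈ I, ∀ b ∈ I, ∀ c : Fin (σ+1), a ≤ c → c ≤ b → c ∈ I) :
    ∀ a ∈ phiM I, ∀ b ∈ phiM I, ∀ c : Fin (σ+2), a ≤ c → c ≤ b → c ∈ phiM I := by
  intro a ha b hb c hac hcb
  rw [phiM_mem] at ha hb ⊢
  by_cases hc0 : c = 0
  · subst hc0
    have ha0 : a = 0 := Fin.le_zero_iff.mp hac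
    subst ha0
    exact ha
  · obtain ⟨c0, rfl⟩ := Fin.eq_succ_of_ne_zero hc0
    right
    -- get upper bound element b0 ∈ I with c0 ≤ b0
    have hb' : ∃ b0 ∈ I, c0 ≤ b0 := by
      rcases hb with ⟨rfl, _⟩ | ⟨b0, hb0, rfl⟩
      · exact absurd (Fin.le_zero_iff.mp hcb) hc0
      · exact ⟨b0, hb0, Fin.succ_le_succ_iff.mp hcb⟩
    obtain ⟨b0, hb0, hcb0⟩ := hb'
    rcases ha with ⟨rfl, h0I⟩ | ⟨a0, ha0, rfl⟩
    · exact ⟨c0, hI 0 h0I b0 hb0 c0 (Fin.zero_le c0) hcb0, rfl⟩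
    · exact ⟨c0, hI a0 ha0 b0 hb0 c0 (Fin.succ_le_succ_iff.mp hac) hcb0, rfl⟩

lemma goodFam_merge {σ : ℕ} (z : Fin (σ+2) → ℂ) (δ : ℝ) (T : Finset (Finset (Fin (σ+1))))
    (h : IsGoodFam (mergeT z) δ T) :
    IsGoodFam z δ (T.image phiM) ∧ (T.image phiM).card = T.card := by
  obtain ⟨hne, hivl, hdisj, hgood⟩ := h
  constructor
  · refine ⟨?_, ?_, ?_, ?_⟩
    · intro I hI
      simp only [Finset.mem_image] at hI
      obtain ⟨I0, hI0, rfl⟩ := hI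
      obtain ⟨i, hi⟩ := hne I0 hI0
      exact ⟨Fin.succ i, (phiM_mem I0 _).mpr (Or.inr ⟨i, hi, rfl⟩)⟩
    · intro I hI
      simp only [Finset.mem_image] at hI
      obtain ⟨I0, hI0, rfl⟩ := hI
      exact phiM_ivl I0 (hivl I0 hI0)
    · intro I hI J hJ hIJ
      simp only [Finset.mem_image] at hI hJ
      obtain ⟨I0, hI0, rfl⟩ := hI
      obtain ⟨J0, hJ0, rfl⟩ := hJ
      have hIJ0 : I0 ≠ J0 := fun h => hIJ (by rw [h])
      have hd := hdisj I0 hI0 J0 hJ0 hIJ0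
      rw [Finset.disjoint_left]
      intro x hx hx'
      rw [phiM_mem] at hx hx'
      rcases hx with ⟨rfl, h0I⟩ | ⟨i, hi, rfl⟩
      · rcases hx' with ⟨_, h0J⟩ | ⟨j, hj, hj'⟩
        · exact (Finset.disjoint_left.mp hd) h0I h0J
        · exact Fin.succ_ne_zero j hj'
      · rcases hx' with ⟨h0, _⟩ | ⟨j, hj, hj'⟩
        · exact Fin.succ_ne_zero i h0
        · have : j = i := Fin.succ_injective _ hj'
          subst this
          exact (Finset.disjoint_left.mp hd) hi hj
    · intro I hI
      simp only [Finset.mem_image] at hI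
      obtain ⟨I0, hI0, rfl⟩ := hI
      rw [phiM_prod]
      exact hgood I0 hI0
  · exact Finset.card_image_of_injective T phiM_inj

lemma mono_cons {σ : ℕ} (t : ℕ) (ℓ' : Fin σ → ℕ) (h : Monotone ℓ') (h2 : ∀ j, t ≤ ℓ' j) :
    Monotone (Fin.cons t ℓ' : Fin (σ+1) → ℕ) := by
  intro u v huv
  cases v using Fin.cases with
  | zero =>
    have : u = 0 := Fin.le_zero_iff.mp huv
    subst this
    exact le_refl _
  | succ j =>
    cases u using Fin.cases with
    | zero =>
      rw [Fin.cons_zero, Fin.cons_succ]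
      exact h2 j
    | succ i =>
      rw [Fin.cons_succ, Fin.cons_succ]
      exact h (Fin.succ_le_succ_iff.mp huv)

lemma cons_pow_prod {σ : ℕ} (z : Fin (σ+1) → ℂ) (t : ℕ) (ℓ' : Fin σ → ℕ) :
    ∏ i, z i ^ (Fin.cons t ℓ' : Fin (σ+1) → ℕ) i = z 0 ^ t * ∏ j, Fin.tail z j ^ ℓ' j := by
  rw [Fin.prod_univ_succ, Fin.cons_zero]
  exact congrArg (z 0 ^ t * ·) (Finset.prod_congr rfl fun j _ => by rw [Fin.cons_succ]; rfl)

lemma mergeT_pow_prod {σ : ℕ} (z : Fin (σ+2) → ℂ) (ℓ' : Fin (σ+1) → ℕ) :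
    ∏ i, mergeT z i ^ ℓ' i = ∏ i, z i ^ (Fin.cons (ℓ' 0) ℓ' : Fin (σ+2) → ℕ) i := by
  rw [Fin.prod_univ_succ, Fin.prod_univ_succ, Fin.cons_zero]
  have h1 : ∏ i : Fin (σ+1), z i.succ ^ (Fin.cons (ℓ' 0) ℓ' : Fin (σ+2) → ℕ) i.succ
      = ∏ i : Fin (σ+1), z i.succ ^ ℓ' i :=
    Finset.prod_congr rfl fun i _ => by rw [Fin.cons_succ]
  rw [h1, Fin.prod_univ_succ (f := fun i : Fin (σ+1) => z i.succ ^ ℓ' i)]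
  have h2 : ∏ j : Fin σ, mergeT z j.succ ^ ℓ' j.succ = ∏ j : Fin σ, z j.succ.succ ^ ℓ' j.succ :=
    Finset.prod_congr rfl fun j _ => by
      rw [mergeT_succ z j.succ (Fin.succ_ne_zero j)]
  rw [h2]
  show (z 0 * z 1) ^ ℓ' 0 * _ = z 0 ^ ℓ' 0 * (z (Fin.succ 0) ^ ℓ' 0 * _)
  rw [Fin.succ_zero_eq_one, mul_pow, mul_assoc]

lemma sum_fact_nonneg (δ : ℝ) (hδ : 0 < δ) (n : ℝ) (hn : 0 ≤ n) (Q : ℕ) :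
    0 ≤ ∑ r ∈ Finset.range Q, (δ * n) ^ r / (r.factorial : ℝ) :=
  Finset.sum_nonneg fun r _ => div_nonneg (pow_nonneg (mul_nonneg hδ.le hn) r)
    (Nat.cast_nonneg _)

lemma one_le_sum_fact (δ : ℝ) (hδ : 0 < δ) (n : ℝ) (hn : 0 ≤ n) (q : ℕ) :
    1 ≤ ∑ r ∈ Finset.range (q+1), (δ * n) ^ r / (r.factorial : ℝ) := by
  have h0 : ((δ * n) ^ 0 / (Nat.factorial 0 : ℝ)) = 1 := by simp
  calc (1:ℝ) = (δ * n) ^ 0 / (Nat.factorial 0 : ℝ) := h0.symm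
    _ ≤ ∑ r ∈ Finset.range (q+1), (δ * n) ^ r / (r.factorial : ℝ) :=
      Finset.single_le_sum (fun r _ => div_nonneg (pow_nonneg (mul_nonneg hδ.le hn) r)
        (Nat.cast_nonneg _)) (Finset.mem_range.mpr (Nat.succ_pos q))

lemma mainBound (δ K : ℝ) (hδ : 0 < δ) (hK : 1 ≤ K) :
    ∀ (σ : ℕ) (z : Fin σ → ℂ) (c : ℂ) (m n q : ℕ),
    (∀ T : Finset (Finset (Fin σ)), IsGoodFam z δ T → T.card ≤ q) →
    (∀ L : ℕ, m + 1 ≤ L → ∀ ℓ : Fin σ → ℕ, Monotone ℓ →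
        (∀ j, m < ℓ j) → (∀ j, ℓ j ≤ L) →
        Complex.abs (c * ∏ j, z j ^ ℓ j) ≤ K ^ L) →
    Complex.abs (c * Ftup σ z (m+1) (m+n))
      ≤ K ^ (m+n+1) * (2/δ) ^ σ * ∑ r ∈ Finset.range (q+1), (δ * n) ^ r / (r.factorial : ℝ) := by
  have hK0 : (0:ℝ) < K := lt_of_lt_of_le zero_lt_one hK
  have h2δ : (0:ℝ) < 2/δ := by positivity
  intro σ
  induction σ with
  | zero =>
    intro z c m n q hq h3
    rw [Ftup, mul_one]
    have hc : Complex.abs c ≤ K ^ (m+n+1) := by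
      have := h3 (m+n+1) (by omega) (fun i => i.elim0) (fun a b _ => a.elim0)
        (fun j => j.elim0) (fun j => j.elim0)
      simpa using this
    calc Complex.abs c ≤ K ^ (m+n+1) := hc
      _ = K ^ (m+n+1) * (2/δ)^0 * 1 := by ring
      _ ≤ K ^ (m+n+1) * (2/δ)^0 *
          ∑ r ∈ Finset.range (q+1), (δ * n) ^ r / (r.factorial : ℝ) := by
        gcongr
        exact one_le_sum_fact δ hδ n (Nat.cast_nonneg n) q
  | succ σ ih =>
    intro z c m n q hq h3
    have hRHS0 : 0 ≤ K ^ (m+n+1) * (2/δ) ^ (σ+1) *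
        ∑ r ∈ Finset.range (q+1), (δ * n) ^ r / (r.factorial : ℝ) :=
      mul_nonneg (mul_nonneg (pow_nonneg hK0.le _) (pow_nonneg h2δ.le _))
        (sum_fact_nonneg δ hδ n (Nat.cast_nonneg n) _)
    by_cases hA : δ ≤ Complex.abs (1 - z 0)
    · -- geometric case
      by_cases hn0 : n = 0
      · subst hn0
        rw [Ftup, Finset.Icc_eq_empty (by omega), Finset.sum_empty, mul_zero, map_zero]
        exact hRHS0
      obtain ⟨n0, rfl⟩ : ∃ n0, n = n0 + 1 := ⟨n - 1, by omega⟩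
      -- key : |c * F| * δ ≤ |c * ((1 - z 0) * F)|
      have habs : ∀ W : ℂ, Complex.abs (c * W) * δ ≤ Complex.abs (c * ((1 - z 0) * W)) := by
        intro W
        rw [map_mul, map_mul, map_mul]
        calc Complex.abs c * Complex.abs W * δ
            ≤ Complex.abs c * Complex.abs W * Complex.abs (1 - z 0) := by gcongr
          _ = Complex.abs c * (Complex.abs (1 - z 0) * Complex.abs W) := by ring
      cases σ with
      | zero =>
        -- single variable geometric sum
        have hgeom : (1 - z 0) * Ftup 1 z (m+1) (m+(n0+1))
            = z 0 ^ (m+1) - z 0 ^ (m+(n0+1)+1) := by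
          rw [Ftup]
          simp only [Ftup, mul_one]
          rw [← Finset.Ico_add_one_right_eq_Icc]
          have := geom_sum_Ico_mul (z 0) (by omega : m+1 ≤ m+(n0+1)+1)
          linear_combination -this
        have hend : ∀ e : ℕ, m+1 ≤ e → e ≤ m+(n0+1)+1 →
            Complex.abs (c * z 0 ^ e) ≤ K ^ (m+(n0+1)+1) := by
          intro e he1 he2
          have := h3 (m+(n0+1)+1) (by omega) (fun _ => e) monotone_const
            (fun _ => by show m < e; omega) (fun _ => by show e ≤ m+(n0+1)+1; omega)
          simpa [Fin.prod_univ_one] using this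
        have hb : Complex.abs (c * Ftup 1 z (m+1) (m+(n0+1))) * δ ≤ 2 * K ^ (m+(n0+1)+1) := by
          refine le_trans (habs _) ?_
          rw [hgeom]
          calc Complex.abs (c * (z 0 ^ (m+1) - z 0 ^ (m+(n0+1)+1)))
              = Complex.abs (c * z 0 ^ (m+1) - c * z 0 ^ (m+(n0+1)+1)) := by ring_nf
            _ ≤ Complex.abs (c * z 0 ^ (m+1)) + Complex.abs (c * z 0 ^ (m+(n0+1)+1)) :=
              AbsoluteValue.sub_le_add _ _ _
            _ ≤ K ^ (m+(n0+1)+1) + K ^ (m+(n0+1)+1) :=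
              add_le_add (hend _ (by omega) (by omega)) (hend _ (by omega) (by omega))
            _ = 2 * K ^ (m+(n0+1)+1) := by ring
        have : Complex.abs (c * Ftup 1 z (m+1) (m+(n0+1))) ≤ 2 / δ * K ^ (m+(n0+1)+1) := by
          rw [div_mul_eq_mul_div, le_div_iff₀ hδ]
          exact le_trans hb (by nlinarith [pow_pos hK0 (m+(n0+1)+1)])
        refine le_trans this ?_
        calc 2 / δ * K ^ (m+(n0+1)+1) = K ^ (m+(n0+1)+1) * (2/δ)^1 * 1 := by ring
          _ ≤ K ^ (m+(n0+1)+1) * (2/δ)^1 *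
              ∑ r ∈ Finset.range (q+1), (δ * (n0+1:ℕ)) ^ r / (r.factorial : ℝ) := by
            gcongr
            exact one_le_sum_fact δ hδ _ (Nat.cast_nonneg _) q
      | succ σ' =>
        have hid := identA z (m+1) (m+(n0+1))
        -- transported q-hypotheses
        have hq_tail : ∀ T : Finset (Finset (Fin (σ'+1))), IsGoodFam (Fin.tail z) δ T → T.card ≤ q := by
          intro T hT
          obtain ⟨hgf, hc⟩ := goodFam_tail z δ T hT
          rw [← hc]
          exact hq _ hgf
        have hq_merge : ∀ T : Finset (Finset (Fin (σ'+1))), IsGoodFam (mergeT z) δ T → T.card ≤ q := by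
          intro T hT
          obtain ⟨hgf, hc⟩ := goodFam_merge z δ T hT
          rw [← hc]
          exact hq _ hgf
        -- transported monomial bounds
        have h3_tail : ∀ L : ℕ, (m+1) + 1 ≤ L → ∀ ℓ' : Fin (σ'+1) → ℕ, Monotone ℓ' →
            (∀ j, m+1 < ℓ' j) → (∀ j, ℓ' j ≤ L) →
            Complex.abs (c * z 0 ^ (m+1) * ∏ j, Fin.tail z j ^ ℓ' j) ≤ K ^ L := by
          intro L hL ℓ' hmono hlo hhi
          have hprod := cons_pow_prod z (m+1) ℓ'
          have := h3 L (by omega) (Fin.cons (m+1) ℓ')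
            (mono_cons (m+1) ℓ' hmono (fun j => le_of_lt (hlo j)))
            (fun j => by
              cases j using Fin.cases with
              | zero => rw [Fin.cons_zero]; omega
              | succ i => rw [Fin.cons_succ]; have := hlo i; omega)
            (fun j => by
              cases j using Fin.cases with
              | zero => rw [Fin.cons_zero]; omega
              | succ i => rw [Fin.cons_succ]; exact hhi i)
          rw [hprod, ← mul_assoc] at this
          exact this
        have h3_merge : ∀ L : ℕ, (m+1) + 1 ≤ L → ∀ ℓ' : Fin (σ'+1) → ℕ, Monotone ℓ' →
            (∀ j, m+1 < ℓ' j) → (∀ j, ℓ' j ≤ L) →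
            Complex.abs (c * ∏ j, mergeT z j ^ ℓ' j) ≤ K ^ L := by
          intro L hL ℓ' hmono hlo hhi
          rw [mergeT_pow_prod]
          refine h3 L (by omega) (Fin.cons (ℓ' 0) ℓ')
            (mono_cons (ℓ' 0) ℓ' hmono (fun j => hmono (Fin.zero_le j)))
            (fun j => ?_) (fun j => ?_)
          · cases j using Fin.cases with
            | zero => rw [Fin.cons_zero]; have := hlo 0; omega
            | succ i => rw [Fin.cons_succ]; have := hlo i; omega
          · cases j using Fin.cases with
            | zero => rw [Fin.cons_zero]; exact hhi 0
            | succ i => rw [Fin.cons_succ]; exact hhi i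
        -- apply induction hypothesis
        have hB1 := ih (Fin.tail z) (c * z 0 ^ (m+1)) (m+1) n0 q hq_tail h3_tail
        have hB2 := ih (mergeT z) c (m+1) n0 q hq_merge h3_merge
        have harith : m + 1 + n0 = m + (n0 + 1) := by omega
        rw [harith] at hB1 hB2
        -- the sums with n0 are at most the sums with n0+1
        have hsum_mono : ∑ r ∈ Finset.range (q+1), (δ * (n0:ℕ)) ^ r / (r.factorial : ℝ)
            ≤ ∑ r ∈ Finset.range (q+1), (δ * ((n0+1:ℕ)):ℝ) ^ r / (r.factorial : ℝ) := by
          refine Finset.sum_le_sum fun r _ => ?_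
          have h1 : (δ * ((n0:ℕ):ℝ)) ^ r ≤ ((δ * ((n0+1:ℕ)):ℝ)) ^ r := by
            apply pow_le_pow_left₀ (by positivity)
            push_cast
            nlinarith
          have h2 : (0:ℝ) < (r.factorial : ℝ) := by
            exact_mod_cast Nat.factorial_pos r
          exact (div_le_div_iff_of_pos_right h2).mpr h1
        set S := ∑ r ∈ Finset.range (q+1), (δ * ((n0+1:ℕ)):ℝ) ^ r / (r.factorial : ℝ) with hS
        have hS0 : 0 ≤ S := sum_fact_nonneg δ hδ _ (Nat.cast_nonneg _) _
        have hbound : Complex.abs (c * Ftup (σ'+2) z (m+1) (m+(n0+1))) * δ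
            ≤ 2 * (K ^ (m+(n0+1)+1) * (2/δ)^(σ'+1) * S) := by
          refine le_trans (habs _) ?_
          rw [hid]
          have hsplit : c * (z 0 ^ (m+1) * Ftup (σ'+1) (Fin.tail z) (m+1+1) (m+(n0+1))
                - Ftup (σ'+1) (mergeT z) (m+1+1) (m+(n0+1)))
              = c * z 0 ^ (m+1) * Ftup (σ'+1) (Fin.tail z) (m+1+1) (m+(n0+1))
                - c * Ftup (σ'+1) (mergeT z) (m+1+1) (m+(n0+1)) := by ring
          rw [hsplit]
          calc Complex.abs _ ≤ Complex.abs (c * z 0 ^ (m+1) * Ftup (σ'+1) (Fin.tail z) (m+1+1) (m+(n0+1)))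
              + Complex.abs (c * Ftup (σ'+1) (mergeT z) (m+1+1) (m+(n0+1))) :=
              AbsoluteValue.sub_le_add _ _ _
            _ ≤ K ^ (m+(n0+1)+1) * (2/δ)^(σ'+1) *
                  (∑ r ∈ Finset.range (q+1), (δ * (n0:ℕ)) ^ r / (r.factorial : ℝ))
                + K ^ (m+(n0+1)+1) * (2/δ)^(σ'+1) *
                  (∑ r ∈ Finset.range (q+1), (δ * (n0:ℕ)) ^ r / (r.factorial : ℝ)) :=
              add_le_add hB1 hB2
            _ ≤ 2 * (K ^ (m+(n0+1)+1) * (2/δ)^(σ'+1) * S) := by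
              have hc0 : 0 ≤ K ^ (m+(n0+1)+1) * (2/δ)^(σ'+1) :=
                mul_nonneg (pow_nonneg hK0.le _) (pow_nonneg h2δ.le _)
              nlinarith [mul_le_mul_of_nonneg_left hsum_mono hc0]
        rw [show (2:ℝ) * (K ^ (m+(n0+1)+1) * (2/δ)^(σ'+1) * S)
            = (K ^ (m+(n0+1)+1) * (2/δ)^(σ'+2) * S) * δ by
              have h : (2:ℝ)/δ*δ = 2 := div_mul_cancel₀ 2 hδ.ne'
              linear_combination (-(K ^ (m+(n0+1)+1) * (2/δ)^(σ'+1) * S)) * h] at hbound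
        have := le_of_mul_le_mul_right hbound hδ
        exact this
    · -- good interval case
      push_neg at hA
      have hq1 : 1 ≤ q := by
        have hgf : IsGoodFam z δ {({0} : Finset (Fin (σ+1)))} := by
          refine ⟨?_, ?_, ?_, ?_⟩
          · intro I hI; rw [Finset.mem_singleton] at hI; subst hI
            exact Finset.singleton_nonempty 0
          · intro I hI a ha b hb c' hac hcb
            rw [Finset.mem_singleton] at hI; subst hI
            rw [Finset.mem_singleton] at ha hb ⊢
            subst ha; subst hb
            exact le_antisymm hcb hac
          · intro I hI J hJ hIJ
            rw [Finset.mem_singleton] at hI hJ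
            exact absurd (hI.trans hJ.symm) hIJ
          · intro I hI; rw [Finset.mem_singleton] at hI; subst hI
            rwa [Finset.prod_singleton]
        have := hq _ hgf
        simpa using this
      have hq_tail' : ∀ T : Finset (Finset (Fin σ)), IsGoodFam (Fin.tail z) δ T → T.card ≤ q - 1 := by
        intro T hT
        obtain ⟨hgf, hc⟩ := goodFam_tail' z δ hA T hT
        have := hq _ hgf
        omega
      rw [Ftup, Finset.mul_sum]
      refine le_trans (AbsoluteValue.sum_le _ _ _) ?_
      set C := K ^ (m+n+1) * (2/δ)^σ with hC
      have hC0 : 0 ≤ C := mul_nonneg (pow_nonneg hK0.le _) (pow_nonneg h2δ.le _)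
      have hterm : ∀ t ∈ Finset.Icc (m+1) (m+n),
          Complex.abs (c * (z 0 ^ t * Ftup σ (Fin.tail z) (t+1) (m+n)))
            ≤ C * ∑ r ∈ Finset.range ((q-1)+1),
                (δ * ((m+n-t : ℕ):ℝ)) ^ r / (r.factorial : ℝ) := by
        intro t ht
        rw [Finset.mem_Icc] at ht
        have h3t : ∀ L : ℕ, t + 1 ≤ L → ∀ ℓ' : Fin σ → ℕ, Monotone ℓ' →
            (∀ j, t < ℓ' j) → (∀ j, ℓ' j ≤ L) →
            Complex.abs (c * z 0 ^ t * ∏ j, Fin.tail z j ^ ℓ' j) ≤ K ^ L := by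
          intro L hL ℓ' hmono hlo hhi
          have hprod := cons_pow_prod z t ℓ'
          have := h3 L (by omega) (Fin.cons t ℓ')
            (mono_cons t ℓ' hmono (fun j => le_of_lt (hlo j)))
            (fun j => by
              cases j using Fin.cases with
              | zero => rw [Fin.cons_zero]; omega
              | succ i => rw [Fin.cons_succ]; have := hlo i; omega)
            (fun j => by
              cases j using Fin.cases with
              | zero => rw [Fin.cons_zero]; omega
              | succ i => rw [Fin.cons_succ]; exact hhi i)
          rw [hprod, ← mul_assoc] at this
          exact this
        have hIH := ih (Fin.tail z) (c * z 0 ^ t) t (m+n-t) (q-1) hq_tail' h3t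
        rw [show t + (m+n-t) = m+n by omega] at hIH
        rw [← mul_assoc]
        exact hIH
      refine le_trans (Finset.sum_le_sum hterm) ?_
      rw [← Finset.mul_sum]
      have hreindex : (∑ t ∈ Finset.Icc (m+1) (m+n),
          ∑ r ∈ Finset.range ((q-1)+1), (δ * ((m+n-t : ℕ):ℝ)) ^ r / (r.factorial : ℝ))
          = ∑ u ∈ Finset.range n,
            ∑ r ∈ Finset.range ((q-1)+1), (δ * ((u : ℕ):ℝ)) ^ r / (r.factorial : ℝ) := by
        refine Finset.sum_nbij' (fun t => m+n-t) (fun u => m+n-u) ?_ ?_ ?_ ?_ ?_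
        · intro t ht; rw [Finset.mem_Icc] at ht; rw [Finset.mem_range]
          show m + n - t < n; omega
        · intro u hu; rw [Finset.mem_range] at hu; rw [Finset.mem_Icc]
          show m + 1 ≤ m + n - u ∧ m + n - u ≤ m + n; omega
        · intro t ht; rw [Finset.mem_Icc] at ht
          show m + n - (m + n - t) = t; omega
        · intro u hu; rw [Finset.mem_range] at hu
          show m + n - (m + n - u) = u; omega
        · intro t _; rfl
      rw [hreindex]
      have hkey : (∑ u ∈ Finset.range n,
            ∑ r ∈ Finset.range ((q-1)+1), (δ * ((u : ℕ):ℝ)) ^ r / (r.factorial : ℝ))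
          ≤ (2/δ) * ∑ r ∈ Finset.range (q+1), (δ * (n:ℝ)) ^ r / (r.factorial : ℝ) := by
        rw [Finset.sum_comm]
        have hr : ∀ r ∈ Finset.range ((q-1)+1),
            (∑ u ∈ Finset.range n, (δ * ((u : ℕ):ℝ)) ^ r / (r.factorial : ℝ))
              ≤ (1/δ) * ((δ * (n:ℝ)) ^ (r+1) / ((r+1).factorial : ℝ)) := by
          intro r _
          have h1 : (∑ u ∈ Finset.range n, (δ * ((u : ℕ):ℝ)) ^ r)
              = δ ^ r * ∑ u ∈ Finset.range n, ((u : ℕ):ℝ) ^ r := by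
            rw [Finset.mul_sum]
            exact Finset.sum_congr rfl fun u _ => by rw [mul_pow]
          have hS : (∑ u ∈ Finset.range n, ((u : ℕ):ℝ) ^ r) ≤ (n:ℝ)^(r+1) / ((r:ℝ)+1) := by
            rw [le_div_iff₀ (by positivity)]
            exact powsum_real r n
          have hfact : (((r+1).factorial : ℕ) : ℝ) = ((r:ℝ)+1) * (r.factorial : ℝ) := by
            rw [Nat.factorial_succ]
            push_cast
            ring
          calc (∑ u ∈ Finset.range n, (δ * ((u : ℕ):ℝ)) ^ r / (r.factorial : ℝ))
              = (δ ^ r * ∑ u ∈ Finset.range n, ((u : ℕ):ℝ) ^ r) / (r.factorial : ℝ) := by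
                rw [← h1, Finset.sum_div]
            _ ≤ (δ ^ r * ((n:ℝ)^(r+1) / ((r:ℝ)+1))) / (r.factorial : ℝ) := by
                have hf0 : (0:ℝ) < (r.factorial : ℝ) := by exact_mod_cast Nat.factorial_pos r
                exact (div_le_div_iff_of_pos_right hf0).mpr
                  (mul_le_mul_of_nonneg_left hS (by positivity))
            _ = (1/δ) * ((δ * (n:ℝ)) ^ (r+1) / ((r+1).factorial : ℝ)) := by
                rw [hfact, mul_pow]
                have hf0 : (0:ℝ) < (r.factorial : ℝ) := by exact_mod_cast Nat.factorial_pos r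
                have hr0 : (0:ℝ) < (r:ℝ)+1 := by positivity
                field_simp
                ring
        refine le_trans (Finset.sum_le_sum hr) ?_
        rw [← Finset.mul_sum]
        rw [show (q-1)+1 = q by omega]
        have hshift : (∑ r ∈ Finset.range q, (δ*(n:ℝ))^(r+1)/(((r+1).factorial : ℕ):ℝ))
            ≤ ∑ r ∈ Finset.range (q+1), (δ*(n:ℝ))^r/((r.factorial : ℕ):ℝ) := by
          rw [Finset.sum_range_succ' (fun r => (δ*(n:ℝ))^r/((r.factorial : ℕ):ℝ)) q]
          exact le_add_of_nonneg_right (by norm_num)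
        have hsum0 : 0 ≤ ∑ r ∈ Finset.range (q+1), (δ*(n:ℝ))^r/((r.factorial : ℕ):ℝ) :=
          sum_fact_nonneg δ hδ n (Nat.cast_nonneg n) _
        calc (1/δ) * ∑ r ∈ Finset.range q, (δ*(n:ℝ))^(r+1)/(((r+1).factorial : ℕ):ℝ)
            ≤ (1/δ) * ∑ r ∈ Finset.range (q+1), (δ*(n:ℝ))^r/((r.factorial : ℕ):ℝ) := by
              apply mul_le_mul_of_nonneg_left hshift (by positivity)
          _ ≤ (2/δ) * ∑ r ∈ Finset.range (q+1), (δ*(n:ℝ))^r/((r.factorial : ℕ):ℝ) := by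
              exact mul_le_mul_of_nonneg_right
                ((div_le_div_iff_of_pos_right hδ).mpr one_le_two) hsum0
      calc C * (∑ u ∈ Finset.range n,
            ∑ r ∈ Finset.range ((q-1)+1), (δ * ((u : ℕ):ℝ)) ^ r / (r.factorial : ℝ))
          ≤ C * ((2/δ) * ∑ r ∈ Finset.range (q+1), (δ * (n:ℝ)) ^ r / (r.factorial : ℝ)) :=
            mul_le_mul_of_nonneg_left hkey hC0
        _ = K ^ (m+n+1) * (2/δ)^(σ+1) *
            ∑ r ∈ Finset.range (q+1), (δ * (n:ℝ)) ^ r / (r.factorial : ℝ) := by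
            rw [hC]; ring


theorem stmt2 (m n s : ℕ) (hn : 1 ≤ n) (hs : 1 ≤ s) (δ : ℝ) (hδ : 0 < δ)
    (x : Fin s → ℂ) (q : ℕ) (K : ℝ)
    -- q bounds the cardinality of any family of pairwise disjoint nonempty intervals
    -- of consecutive integers I ⊆ {1,...,s} with |1 - ∏_{j ∈ I} x j| < δ
    (hq : ∀ T : Finset (Finset (Fin s)),
      (∀ I ∈ T, I.Nonempty) →
      (∀ I ∈ T, ∀ a ∈ I, ∀ b ∈ I, ∀ c : Fin s, a ≤ c → c ≤ b → c ∈ I) →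
      (∀ I ∈ T, ∀ J ∈ T, I ≠ J → Disjoint I J) →
      (∀ I ∈ T, ‖1 - ∏ j ∈ I, x j‖ < δ) →
      T.card ≤ q)
    -- K is at least 1 and at least every tail product of the |x j|
    (hK1 : 1 ≤ K)
    (hKa : ∀ a : Fin s, ∏ j ∈ Finset.univ.filter (fun j => a ≤ j), ‖x j‖ ≤ K) :
    ‖∑ ℓ ∈ (Fintype.piFinset fun _ : Fin s => Finset.Icc (m + 1) (m + n)).filter
        (fun ℓ => StrictMono ℓ), ∏ j, x j ^ ℓ j‖
      ≤ K ^ (m + n + 1) * (2 / δ) ^ s *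
          ∑ r ∈ Finset.range (q + 1), (δ * n) ^ r / (r.factorial : ℝ) := by
  rw [EQ s x (m+1) (m+n)]
  have := mainBound δ K hδ hK1 s x 1 m n q
    (fun T hT => hq T hT.1 hT.2.1 hT.2.2.1 hT.2.2.2)
    (fun L hL ℓ hmono _ hhi => by
      rw [one_mul]
      have habs : Complex.abs (∏ j, x j ^ ℓ j) = ∏ j, Complex.abs (x j) ^ ℓ j := by
        rw [map_prod]
        exact Finset.prod_congr rfl fun j _ => map_pow _ _ _
      rw [habs]
      exact monoprod_bound s x K hK1 hKa ℓ hmono L hhi)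
  rwa [one_mul] at this
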